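/- arXiv:math/0311477 — 3 statements merged into one kernel-verified Lean document; each statement's English description precedes it below -/
import Mathlib

section
/- The symmetrized bidisc G₂ is not biholomorphic to the open unit Euclidean ball B₂ = {(z₁,z₂) ∈ ℂ² : |z₁|² + |z₂|² < 1}: there is no bijective holomorphic map G₂ → B₂ with holomorphic inverse. -/
open Set
open Complex Metric intervalIntegral

noncomputable section

/-- The symmetrization map `π(λ₁,λ₂) = (λ₁+λ₂, λ₁λ₂)`. -/
def symPi (l₁ l₂ : ℂ) : ℂ × ℂ := (l₁ + l₂, l₁ * l₂)

/-- The open unit disc `E ⊂ ℂ`. -/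
def unitDisc : Set ℂ := {z : ℂ | ‖z‖ < 1}

/-- The symmetrized bidisc `G₂ = π(E × E)`. -/
def G2 : Set (ℂ × ℂ) := {w | ∃ l₁ ∈ unitDisc, ∃ l₂ ∈ unitDisc, symPi l₁ l₂ = w}

/-- The royal variety `Σ₂ = {(2λ, λ²) : λ ∈ E}`. -/
def Sigma2 : Set (ℂ × ℂ) := {w | ∃ l ∈ unitDisc, (2 * l, l ^ 2) = w}

/-- `F` is a holomorphic automorphism of the domain `D ⊆ V`: it is holomorphic on `D`,
maps `D` into `D`, and has a holomorphic two-sided inverse on `D`. -/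
def IsAutomorphismOf {V : Type} [NormedAddCommGroup V] [NormedSpace ℂ V]
    (D : Set V) (F : V → V) : Prop :=
  DifferentiableOn ℂ F D ∧ Set.MapsTo F D D ∧
    ∃ G : V → V, DifferentiableOn ℂ G D ∧ Set.MapsTo G D D ∧ Set.InvOn G F D D

/-- The open unit Euclidean ball in `ℂ²`. -/
def euclideanBall2 : Set (ℂ × ℂ) :=
  {z : ℂ × ℂ | ‖z.1‖ ^ 2 + ‖z.2‖ ^ 2 < 1}


lemma integral_circle_eq {g : ℂ → ℂ} {c : ℂ} {r : ℝ} (hr : 0 < r)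
    (hg : DifferentiableOn ℂ g (closedBall c r)) :
    ∫ θ in (0:ℝ)..(2*Real.pi), g (circleMap c r θ) = (2*Real.pi : ℂ) * g c := by
  have h := hg.circleIntegral_sub_inv_smul (w := c) (mem_ball_self hr)
  rw [circleIntegral] at h
  have : ∀ θ : ℝ, deriv (circleMap c r) θ • (circleMap c r θ - c)⁻¹ • g (circleMap c r θ)
      = I * g (circleMap c r θ) := by
    intro θ
    rw [deriv_circleMap, circleMap_sub_center, smul_eq_mul, smul_eq_mul]
    have hne : circleMap 0 r θ ≠ 0 := by
      simpa using circleMap_ne_center (ne_of_gt hr) (c := 0) (θ := θ)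
    field_simp
  simp only [this] at h
  rw [intervalIntegral.integral_const_mul] at h
  have hI : (I : ℂ) ≠ 0 := I_ne_zero
  apply mul_left_cancel₀ hI
  rw [h, smul_eq_mul]; ring

lemma integral_exp_neg_theta : ∫ θ in (0:ℝ)..(2*Real.pi), Complex.exp (-(θ:ℂ)*I) = 0 := by
  have h : ∀ θ : ℝ, Complex.exp (-(θ:ℂ)*I) = Complex.exp ((-I) * (θ:ℂ)) := by intro θ; ring_nf
  simp only [h]
  rw [integral_exp_mul_complex (by simp [I_ne_zero])]
  have h2 : (-I) * ((2*Real.pi : ℝ) : ℂ) = -(2 * Real.pi * I) := by push_cast; ring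
  rw [h2]
  simp [Complex.exp_neg, Complex.exp_two_pi_mul_I]

lemma integral_circle_deriv {g : ℂ → ℂ} {c : ℂ} {r R : ℝ} (hr : 0 < r) (hrR : r < R)
    (hg : DifferentiableOn ℂ g (ball c R)) :
    ∫ θ in (0:ℝ)..(2*Real.pi), (circleMap 0 r θ)⁻¹ * (g (circleMap c r θ) - g c)
      = (2*Real.pi : ℂ) * deriv g c := by
  have hmem : ball c R ∈ nhds c := isOpen_ball.mem_nhds (mem_ball_self (hr.trans hrR))
  have hd : DifferentiableOn ℂ (dslope g c) (closedBall c r) :=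
    ((differentiableOn_dslope hmem).2 hg).mono (closedBall_subset_ball hrR)
  have h := integral_circle_eq hr hd
  rw [dslope_same] at h
  rw [← h]
  apply intervalIntegral.integral_congr
  intro θ _
  have hne : circleMap c r θ ≠ c := circleMap_ne_center (ne_of_gt hr)
  show (circleMap 0 r θ)⁻¹ * (g (circleMap c r θ) - g c) = dslope g c (circleMap c r θ)
  rw [dslope_of_ne _ hne, slope_def_field, div_eq_inv_mul, ← circleMap_sub_center]

lemma mean_sq_lower {g : ℂ → ℂ} {c : ℂ} {r R : ℝ} (hr : 0 < r) (hrR : r < R)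
    (hg : DifferentiableOn ℂ g (ball c R)) :
    2*Real.pi * (normSq (g c) + r^2 * normSq (deriv g c))
      ≤ ∫ θ in (0:ℝ)..(2*Real.pi), normSq (g (circleMap c r θ)) := by
  set a₀ := g c with ha0
  set a₁ := deriv g c with ha1
  set u : ℝ → ℂ := fun θ => g (circleMap c r θ) with hu_def
  set B : ℝ → ℂ := fun θ => a₀ + a₁ * circleMap 0 r θ with hB_def
  have hmem : ∀ θ : ℝ, circleMap c r θ ∈ ball c R := by
    intro θ
    have := circleMap_mem_sphere c hr.le θ
    rw [mem_sphere] at this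
    rw [mem_ball, this]; exact hrR
  have hu : Continuous u :=
    hg.continuousOn.comp_continuous (continuous_circleMap c r) hmem
  have hcm : Continuous fun θ : ℝ => circleMap 0 r θ := continuous_circleMap 0 r
  have hcmne : ∀ θ : ℝ, circleMap 0 r θ ≠ 0 := by
    intro θ; simpa using circleMap_ne_center (ne_of_gt hr) (c := 0) (θ := θ)
  -- basic integrals
  have hI0 : ∫ θ in (0:ℝ)..(2*Real.pi), u θ = (2*Real.pi : ℂ) * a₀ :=
    integral_circle_eq hr (hg.mono (closedBall_subset_ball hrR))
  have hI1 : ∫ θ in (0:ℝ)..(2*Real.pi), (circleMap 0 r θ)⁻¹ * (u θ - a₀)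
      = (2*Real.pi : ℂ) * a₁ := integral_circle_deriv hr hrR hg
  have hIinv : ∫ θ in (0:ℝ)..(2*Real.pi), (circleMap 0 r θ)⁻¹ = 0 := by
    have : ∀ θ : ℝ, (circleMap 0 r θ)⁻¹ = (r:ℂ)⁻¹ * Complex.exp (-(θ:ℂ)*I) := by
      intro θ
      rw [circleMap_zero, mul_inv, ← Complex.exp_neg]
      ring_nf
    simp only [this]
    rw [intervalIntegral.integral_const_mul, integral_exp_neg_theta, mul_zero]
  -- integrability
  have hint_u : IntervalIntegrable u MeasureTheory.volume 0 (2*Real.pi) :=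
    hu.intervalIntegrable _ _
  have hint_inv : IntervalIntegrable (fun θ => (circleMap 0 r θ)⁻¹)
      MeasureTheory.volume 0 (2*Real.pi) :=
    ((hcm.inv₀ hcmne)).intervalIntegrable _ _
  have hint_invu : IntervalIntegrable (fun θ => (circleMap 0 r θ)⁻¹ * (u θ - a₀))
      MeasureTheory.volume 0 (2*Real.pi) :=
    ((hcm.inv₀ hcmne).mul (hu.sub continuous_const)).intervalIntegrable _ _
  -- ∫ u * conj (circleMap 0 r θ)
  have hconj : ∀ θ : ℝ, (starRingEnd ℂ) (circleMap 0 r θ) = (r:ℝ)^2 * (circleMap 0 r θ)⁻¹ := by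
    intro θ
    have h1 : circleMap 0 r θ * (starRingEnd ℂ) (circleMap 0 r θ) = ((r:ℝ)^2 : ℂ) := by
      rw [Complex.mul_conj]
      norm_cast
      rw [Complex.normSq_eq_norm_sq]
      have habs : ‖circleMap 0 r θ‖ = r := by
        have := norm_circleMap_zero r θ
        rwa [abs_of_pos hr] at this
      rw [habs]
    field_simp [hcmne θ] at h1 ⊢
    linear_combination h1
  have hIe : ∫ θ in (0:ℝ)..(2*Real.pi), u θ * (starRingEnd ℂ) (circleMap 0 r θ)
      = (2*Real.pi : ℂ) * (r:ℝ)^2 * a₁ := by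
    have : ∀ θ : ℝ, u θ * (starRingEnd ℂ) (circleMap 0 r θ)
        = ((r:ℝ)^2 : ℂ) * ((circleMap 0 r θ)⁻¹ * (u θ - a₀))
          + ((r:ℝ)^2 * a₀ : ℂ) * (circleMap 0 r θ)⁻¹ := by
      intro θ; rw [hconj θ]; ring
    rw [intervalIntegral.integral_congr (fun θ _ => this θ)]
    rw [intervalIntegral.integral_add ((hint_invu.const_mul _)) (hint_inv.const_mul _),
      intervalIntegral.integral_const_mul, intervalIntegral.integral_const_mul, hI1, hIinv]
    ring
  set S : ℝ := normSq a₀ + r^2 * normSq a₁ with hS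
  have hB : Continuous B := continuous_const.add (continuous_const.mul hcm)
  have hconjB : Continuous fun θ => (starRingEnd ℂ) (B θ) := Complex.continuous_conj.comp hB
  have huB : Continuous fun θ => u θ * (starRingEnd ℂ) (B θ) := hu.mul hconjB
  have hX : ∫ θ in (0:ℝ)..(2*Real.pi), u θ * (starRingEnd ℂ) (B θ) = 2*Real.pi * (S:ℝ) := by
    have hpt : ∀ θ : ℝ, u θ * (starRingEnd ℂ) (B θ)
        = (starRingEnd ℂ) a₀ * u θ
          + (starRingEnd ℂ) a₁ * (u θ * (starRingEnd ℂ) (circleMap 0 r θ)) := by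
      intro θ
      simp only [hB_def, map_add, map_mul]
      ring
    rw [intervalIntegral.integral_congr (fun θ _ => hpt θ)]
    have hcont2 : Continuous fun θ => u θ * (starRingEnd ℂ) (circleMap 0 r θ) :=
      hu.mul (Complex.continuous_conj.comp hcm)
    rw [intervalIntegral.integral_add
      ((hu.intervalIntegrable _ _).const_mul _) ((hcont2.intervalIntegrable _ _).const_mul _),
      intervalIntegral.integral_const_mul, intervalIntegral.integral_const_mul, hI0, hIe]
    have h1 : (starRingEnd ℂ) a₀ * a₀ = ((normSq a₀ : ℝ) : ℂ) := by
      rw [mul_comm, Complex.mul_conj]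
    have h2 : (starRingEnd ℂ) a₁ * a₁ = ((normSq a₁ : ℝ) : ℂ) := by
      rw [mul_comm, Complex.mul_conj]
    rw [hS]
    push_cast
    linear_combination (2*Real.pi : ℂ) * h1 + 2*Real.pi*(r:ℂ)^2*h2
  have hY : ∫ θ in (0:ℝ)..(2*Real.pi), normSq (B θ) = 2*Real.pi * S := by
    have hpt : ∀ θ : ℝ, normSq (B θ)
        = S + 2*((a₀ * (starRingEnd ℂ) a₁ * (r:ℝ)^2) * (circleMap 0 r θ)⁻¹).re := by
      intro θ
      simp only [hB_def]
      rw [Complex.normSq_add, Complex.normSq_mul]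
      have habs : normSq (circleMap 0 r θ) = r^2 := by
        rw [Complex.normSq_eq_norm_sq]
        have := norm_circleMap_zero r θ
        rw [abs_of_pos hr] at this
        rw [this]
      rw [habs, hS, map_mul, hconj θ]
      ring_nf
    rw [intervalIntegral.integral_congr (fun θ _ => hpt θ)]
    have hcont3 : Continuous fun θ : ℝ => (a₀ * (starRingEnd ℂ) a₁ * (r:ℝ)^2) * (circleMap 0 r θ)⁻¹ :=
      continuous_const.mul (hcm.inv₀ hcmne)
    have hcont4 : Continuous fun θ : ℝ => ((a₀ * (starRingEnd ℂ) a₁ * (r:ℝ)^2) * (circleMap 0 r θ)⁻¹).re :=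
      Complex.continuous_re.comp hcont3
    rw [intervalIntegral.integral_add (intervalIntegrable_const)
      ((hcont4.intervalIntegrable _ _).const_mul _),
      intervalIntegral.integral_const_mul]
    have hre : (fun θ : ℝ => ((a₀ * (starRingEnd ℂ) a₁ * (r:ℝ)^2) * (circleMap 0 r θ)⁻¹).re)
        = fun θ : ℝ => Complex.reCLM ((a₀ * (starRingEnd ℂ) a₁ * (r:ℝ)^2) * (circleMap 0 r θ)⁻¹) := rfl
    rw [hre, Complex.reCLM.intervalIntegral_comp_comm (hcont3.intervalIntegrable _ _),
      intervalIntegral.integral_const_mul, hIinv, mul_zero]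
    simp
  have hnonneg : 0 ≤ ∫ θ in (0:ℝ)..(2*Real.pi), normSq (u θ - B θ) := by
    apply intervalIntegral.integral_nonneg (by positivity)
    intro θ _
    exact Complex.normSq_nonneg _
  have hexpand : ∀ θ : ℝ, normSq (u θ - B θ)
      = normSq (u θ) + normSq (B θ) - 2*(Complex.reCLM (u θ * (starRingEnd ℂ) (B θ))) := by
    intro θ; exact Complex.normSq_sub _ _
  rw [intervalIntegral.integral_congr (fun θ _ => hexpand θ)] at hnonneg
  have hintnsu : IntervalIntegrable (fun θ => normSq (u θ)) MeasureTheory.volume 0 (2*Real.pi) :=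
    (Complex.continuous_normSq.comp hu).intervalIntegrable _ _
  have hintnsB : IntervalIntegrable (fun θ => normSq (B θ)) MeasureTheory.volume 0 (2*Real.pi) :=
    (Complex.continuous_normSq.comp hB).intervalIntegrable _ _
  have hintre : IntervalIntegrable (fun θ => (Complex.reCLM (u θ * (starRingEnd ℂ) (B θ)) : ℝ))
      MeasureTheory.volume 0 (2*Real.pi) :=
    (Complex.continuous_re.comp huB).intervalIntegrable _ _
  rw [intervalIntegral.integral_sub (hintnsu.add hintnsB) (hintre.const_mul _),
    intervalIntegral.integral_add hintnsu hintnsB,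
    intervalIntegral.integral_const_mul,
    Complex.reCLM.intervalIntegral_comp_comm (huB.intervalIntegrable _ _), hY] at hnonneg
  have hre2 : (Complex.reCLM (∫ θ in (0:ℝ)..(2*Real.pi), u θ * (starRingEnd ℂ) (B θ)) : ℝ)
      = 2*Real.pi*S := by
    rw [hX]; simp
  rw [hre2] at hnonneg
  have hgoal : (∫ θ in (0:ℝ)..(2*Real.pi), normSq (g (circleMap c r θ)))
      = ∫ θ in (0:ℝ)..(2*Real.pi), normSq (u θ) := rfl
  rw [hgoal]
  linarith [hnonneg]

lemma deriv_small_of_shell {f₁ f₂ : ℂ → ℂ} {c : ℂ} {r R ε : ℝ} (hr : 0 < r) (hrR : r < R)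
    (h1 : DifferentiableOn ℂ f₁ (ball c R)) (h2 : DifferentiableOn ℂ f₂ (ball c R))
    (hup : ∀ w ∈ ball c R, normSq (f₁ w) + normSq (f₂ w) ≤ 1)
    (hlo : 1 - ε ≤ normSq (f₁ c) + normSq (f₂ c)) :
    r^2 * normSq (deriv f₁ c) ≤ ε ∧ r^2 * normSq (deriv f₂ c) ≤ ε := by
  have hb1 := mean_sq_lower hr hrR h1
  have hb2 := mean_sq_lower hr hrR h2
  have hmem : ∀ θ : ℝ, circleMap c r θ ∈ ball c R := by
    intro θ
    have := circleMap_mem_sphere c hr.le θ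
    rw [mem_sphere] at this
    rw [mem_ball, this]; exact hrR
  have hcm : Continuous fun θ : ℝ => circleMap c r θ := continuous_circleMap c r
  have hc1 : Continuous fun θ : ℝ => normSq (f₁ (circleMap c r θ)) :=
    Complex.continuous_normSq.comp (h1.continuousOn.comp_continuous hcm hmem)
  have hc2 : Continuous fun θ : ℝ => normSq (f₂ (circleMap c r θ)) :=
    Complex.continuous_normSq.comp (h2.continuousOn.comp_continuous hcm hmem)
  have hup' : (∫ θ in (0:ℝ)..(2*Real.pi), (normSq (f₁ (circleMap c r θ)) + normSq (f₂ (circleMap c r θ))))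
      ≤ ∫ _ in (0:ℝ)..(2*Real.pi), (1:ℝ) := by
    apply intervalIntegral.integral_mono_on (by positivity)
      ((hc1.add hc2).intervalIntegrable _ _) (intervalIntegrable_const)
    intro θ _
    exact hup _ (hmem θ)
  rw [intervalIntegral.integral_const, intervalIntegral.integral_add (hc1.intervalIntegrable _ _)
    (hc2.intervalIntegrable _ _)] at hup'
  have hsum : 2*Real.pi * ((normSq (f₁ c) + r^2*normSq (deriv f₁ c))
      + (normSq (f₂ c) + r^2*normSq (deriv f₂ c))) ≤ 2*Real.pi * 1 := by
    rw [mul_one]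
    calc 2*Real.pi * ((normSq (f₁ c) + r^2*normSq (deriv f₁ c))
        + (normSq (f₂ c) + r^2*normSq (deriv f₂ c)))
        = 2*Real.pi * ((normSq (f₁ c) + r^2*normSq (deriv f₁ c)))
          + 2*Real.pi * ((normSq (f₂ c) + r^2*normSq (deriv f₂ c))) := by ring
      _ ≤ (∫ θ in (0:ℝ)..(2*Real.pi), normSq (f₁ (circleMap c r θ)))
          + ∫ θ in (0:ℝ)..(2*Real.pi), normSq (f₂ (circleMap c r θ)) := add_le_add hb1 hb2
      _ ≤ 2*Real.pi := by simpa [smul_eq_mul] using hup'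
  have hpi : (0:ℝ) < 2*Real.pi := by positivity
  have h1' : (normSq (f₁ c) + r^2*normSq (deriv f₁ c))
      + (normSq (f₂ c) + r^2*normSq (deriv f₂ c)) ≤ 1 := le_of_mul_le_mul_left hsum hpi
  constructor
  · nlinarith [normSq_nonneg (deriv f₂ c), normSq_nonneg (f₂ c), sq_nonneg r]
  · nlinarith [normSq_nonneg (deriv f₁ c), normSq_nonneg (f₁ c), sq_nonneg r]

lemma vieta_abs {l m : ℂ} (h : symPi l m ∈ G2) :
    ‖l‖ < 1 ∧ ‖m‖ < 1 := by
  obtain ⟨l₁, h₁, l₂, h₂, he⟩ := h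
  rw [Prod.ext_iff] at he
  obtain ⟨hsum, hprod⟩ := he
  simp only [symPi] at hsum hprod
  have key : ∀ x : ℂ, x + (l + m - x) = l + m → x * (l + m - x) = l * m →
      ‖x‖ < 1 → False → True := fun _ _ _ _ _ => trivial
  have hl : (l - l₁) * (l - l₂) = 0 := by linear_combination (-l) * hsum + hprod
  have hm : (m - l₁) * (m - l₂) = 0 := by linear_combination (-m) * hsum + hprod
  constructor
  · rcases mul_eq_zero.1 hl with h | h
    · rw [sub_eq_zero] at h; rw [h]; exact h₁
    · rw [sub_eq_zero] at h; rw [h]; exact h₂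
  · rcases mul_eq_zero.1 hm with h | h
    · rw [sub_eq_zero] at h; rw [h]; exact h₁
    · rw [sub_eq_zero] at h; rw [h]; exact h₂

lemma symPi_mem_G2 {l m : ℂ} (hl : ‖l‖ < 1) (hm : ‖m‖ < 1) :
    symPi l m ∈ G2 := ⟨l, hl, m, hm, rfl⟩

lemma mem_ball_iff_abs {z : ℂ} {t : ℝ} : z ∈ ball (0:ℂ) t ↔ ‖z‖ < t := by
  rw [mem_ball_zero_iff]

lemma far_from_center {F G : ℂ × ℂ → ℂ × ℂ}
    (hG : DifferentiableOn ℂ G euclideanBall2)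
    (hbij : Set.BijOn F G2 euclideanBall2) (hinv : Set.InvOn G F G2 euclideanBall2)
    {ε : ℝ} (hε : 0 < ε) :
    ∃ M : ℝ, 0 ≤ M ∧ M < 1 ∧ ∀ l m : ℂ, ‖l‖ < 1 → ‖m‖ < 1 →
      M < ‖l‖ →
      1 - ε < normSq ((F (symPi l m)).1) + normSq ((F (symPi l m)).2) := by
  classical
  set K : Set (ℂ × ℂ) := {z : ℂ × ℂ | normSq z.1 + normSq z.2 ≤ 1 - ε} with hK
  have hKsub : K ⊆ euclideanBall2 := by
    intro z hz
    simp only [hK, mem_setOf_eq] at hz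
    simp only [euclideanBall2, mem_setOf_eq, Complex.sq_norm]
    have := normSq_nonneg z.1
    have := normSq_nonneg z.2
    linarith
  have hKc : IsCompact K := by
    have hcl : IsClosed K := isClosed_le (by continuity) continuous_const
    have hbd : Bornology.IsBounded K := by
      apply (Metric.isBounded_closedBall (x := ((0:ℂ),(0:ℂ))) (r := 1)).subset
      intro z hz
      simp only [hK, mem_setOf_eq] at hz
      have h1 : normSq z.1 ≤ 1 := by have := normSq_nonneg z.2; linarith
      have h2 : normSq z.2 ≤ 1 := by have := normSq_nonneg z.1; linarith
      rw [mem_closedBall, dist_eq_norm]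
      have hz0 : z - ((0:ℂ),(0:ℂ)) = z := by simp
      rw [hz0, Prod.norm_def]
      have e1 : ‖z.1‖ ≤ 1 := by
        rw [← Real.sqrt_one, Complex.norm_def]
        exact Real.sqrt_le_sqrt h1
      have e2 : ‖z.2‖ ≤ 1 := by
        rw [← Real.sqrt_one, Complex.norm_def]
        exact Real.sqrt_le_sqrt h2
      exact max_le e1 e2
    exact Metric.isCompact_of_isClosed_isBounded hcl hbd
  have hGK : IsCompact (G '' K) :=
    hKc.image_of_continuousOn (hG.continuousOn.mono hKsub)
  have hGKsub : G '' K ⊆ G2 := by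
    rintro _ ⟨k, hk, rfl⟩
    obtain ⟨x, hx, hFx⟩ := hbij.surjOn (hKsub hk)
    rw [← hFx, hinv.1 hx]
    exact hx
  set C : Set (ℂ × ℂ) := insert ((0:ℂ), (0:ℂ))
    ((closedBall (0:ℂ) 1 ×ˢ closedBall (0:ℂ) 1) ∩
      (fun z : ℂ × ℂ => ((z.1 + z.2 : ℂ), (z.1 * z.2 : ℂ))) ⁻¹' (G '' K)) with hC
  have hCc : IsCompact C := by
    apply IsCompact.insert
    exact ((isCompact_closedBall _ _).prod (isCompact_closedBall _ _)).inter_right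
      (hGK.isClosed.preimage (by continuity))
  have hCne : C.Nonempty := ⟨_, mem_insert _ _⟩
  have hcont : ContinuousOn (fun z : ℂ × ℂ => max (‖z.1‖) (‖z.2‖)) C :=
    (Continuous.max (continuous_norm.comp continuous_fst)
      (continuous_norm.comp continuous_snd)).continuousOn
  obtain ⟨x₀, hx₀, hmax'⟩ := hCc.exists_isMaxOn hCne hcont
  have hmax : ∀ y ∈ C, max (‖y.1‖) (‖y.2‖)
      ≤ max (‖x₀.1‖) (‖x₀.2‖) := fun y hy => hmax' hy
  refine ⟨max (‖x₀.1‖) (‖x₀.2‖), le_max_iff.2 (Or.inl (norm_nonneg _)), ?_, ?_⟩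
  · rcases hx₀ with h | h
    · rw [h]; simp
    · have hmem : symPi x₀.1 x₀.2 ∈ G2 := hGKsub h.2
      obtain ⟨ha, hb⟩ := vieta_abs hmem
      exact max_lt ha hb
  · intro l m hl hm hMl
    by_contra hcon
    push_neg at hcon
    have hFK : F (symPi l m) ∈ K := by
      simp only [hK, mem_setOf_eq]; exact hcon
    have hmemG2 : symPi l m ∈ G2 := symPi_mem_G2 hl hm
    have hpre : symPi l m ∈ G '' K := by
      have : G (F (symPi l m)) = symPi l m := hinv.1 hmemG2
      rw [← this]
      exact mem_image_of_mem G hFK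
    have hlm : ((l, m) : ℂ × ℂ) ∈ C := by
      apply mem_insert_of_mem
      constructor
      · constructor
        · rw [mem_closedBall, dist_zero_right]; exact hl.le
        · rw [mem_closedBall, dist_zero_right]; exact hm.le
      · simpa [symPi] using hpre
    have := hmax _ hlm
    have : ‖l‖ ≤ max (‖x₀.1‖) (‖x₀.2‖) :=
      le_trans (le_max_left _ _) this
    linarith

lemma eq_zero_of_le_sqrt {a C : ℝ} (ha : 0 ≤ a) (h : ∀ ε : ℝ, 0 < ε → a ≤ C * Real.sqrt ε) :
    a = 0 := by
  by_contra hne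
  have hapos : 0 < a := lt_of_le_of_ne ha (Ne.symm hne)
  have hC : 0 < C := by
    have := h 1 one_pos
    rw [Real.sqrt_one, mul_one] at this
    linarith
  have hεpos : 0 < (a / (2*C))^2 := by positivity
  have := h _ hεpos
  rw [Real.sqrt_sq (by positivity)] at this
  have : a ≤ a / 2 := by
    have hc : C * (a / (2*C)) = a / 2 := by field_simp
    linarith [hc ▸ this]
  linarith

lemma slice_diff_w {F : ℂ × ℂ → ℂ × ℂ} (hF : DifferentiableOn ℂ F G2) {l : ℂ}
    (hl : ‖l‖ < 1) :
    DifferentiableOn ℂ (fun w => F (symPi l w)) (ball (0:ℂ) 1) := by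
  apply DifferentiableOn.comp hF
  · exact (Differentiable.differentiableOn (by
      apply Differentiable.prodMk
      · exact (differentiable_const l).add differentiable_id
      · exact (differentiable_const l).mul differentiable_id))
  · intro w hw
    exact symPi_mem_G2 hl (mem_ball_iff_abs.1 hw)

lemma slice_diff_l {F : ℂ × ℂ → ℂ × ℂ} (hF : DifferentiableOn ℂ F G2) {m : ℂ}
    (hm : ‖m‖ < 1) :
    DifferentiableOn ℂ (fun l => F (symPi l m)) (ball (0:ℂ) 1) := by
  apply DifferentiableOn.comp hF
  · exact (Differentiable.differentiableOn (by
      apply Differentiable.prodMk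
      · exact differentiable_id.add (differentiable_const m)
      · exact differentiable_id.mul (differentiable_const m)))
  · intro w hw
    exact symPi_mem_G2 (mem_ball_iff_abs.1 hw) hm

lemma diff_bound {F G : ℂ × ℂ → ℂ × ℂ} (hF : DifferentiableOn ℂ F G2)
    (hG : DifferentiableOn ℂ G euclideanBall2)
    (hbij : Set.BijOn F G2 euclideanBall2) (hinv : Set.InvOn G F G2 euclideanBall2)
    {x₁ x₂ : ℂ} (h₁ : ‖x₁‖ < 1) (h₂ : ‖x₂‖ < 1) {ε : ℝ} (hε : 0 < ε) :
    ∃ M : ℝ, 0 ≤ M ∧ M < 1 ∧ ∀ l : ℂ, ‖l‖ < 1 → M < ‖l‖ →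
      ‖F (symPi l x₁) - F (symPi l x₂)‖
        ≤ (Real.sqrt ε * (8 / (1 - max (‖x₁‖) (‖x₂‖)))) * ‖x₁ - x₂‖ := by
  obtain ⟨M, hM0, hM1, hfar⟩ := far_from_center hG hbij hinv hε
  refine ⟨M, hM0, hM1, ?_⟩
  intro l hl hMl
  set R' := max (‖x₁‖) (‖x₂‖) with hR'
  have hR'0 : 0 ≤ R' := le_max_iff.2 (Or.inl (norm_nonneg _))
  have hR'1 : R' < 1 := max_lt h₁ h₂
  set r := (1 - R')/8 with hr_def
  have hr : 0 < r := by rw [hr_def]; linarith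
  set Rloc := (1 - R')/4 with hRloc_def
  have hrR : r < Rloc := by rw [hr_def, hRloc_def]; linarith
  set s := closedBall (0:ℂ) ((1+R')/2) with hs_def
  set p : ℂ → ℂ := fun w => (F (symPi l w)).1 with hp_def
  set q : ℂ → ℂ := fun w => (F (symPi l w)).2 with hq_def
  have hslice := slice_diff_w hF hl
  have hp : DifferentiableOn ℂ p (ball (0:ℂ) 1) :=
    (ContinuousLinearMap.fst ℂ ℂ ℂ).differentiable.comp_differentiableOn hslice
  have hq : DifferentiableOn ℂ q (ball (0:ℂ) 1) :=
    (ContinuousLinearMap.snd ℂ ℂ ℂ).differentiable.comp_differentiableOn hslice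
  have hs_sub : s ⊆ ball (0:ℂ) 1 := by
    intro x hx
    rw [mem_closedBall, dist_zero_right] at hx
    rw [mem_ball_iff_abs]
    linarith
  have hder : ∀ x ∈ s, ‖deriv p x‖ ≤ Real.sqrt ε / r ∧ ‖deriv q x‖ ≤ Real.sqrt ε / r := by
    intro x hx
    rw [hs_def, mem_closedBall, dist_zero_right] at hx
    have hx1 : ‖x‖ < 1 := by linarith
    have hball : ball x Rloc ⊆ ball (0:ℂ) 1 := by
      intro w hw
      rw [mem_ball, dist_eq_norm] at hw
      rw [mem_ball_iff_abs]
      calc ‖w‖ ≤ ‖w - x‖ + ‖x‖ := by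
            simpa using norm_add_le (w - x) x
        _ < Rloc + (1+R')/2 := by exact add_lt_add_of_lt_of_le hw hx
        _ ≤ 1 := by rw [hRloc_def]; linarith
    have := deriv_small_of_shell (ε := ε) hr hrR (hp.mono hball) (hq.mono hball) ?_ ?_
    · obtain ⟨e1, e2⟩ := this
      have hr2 : (0:ℝ) < r^2 := by positivity
      constructor
      · rw [Complex.norm_def]
        have : normSq (deriv p x) ≤ ε / r^2 := by
          rw [le_div_iff₀ hr2]; linarith [e1]
        calc Real.sqrt (normSq (deriv p x)) ≤ Real.sqrt (ε / r^2) := Real.sqrt_le_sqrt this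
          _ = Real.sqrt ε / r := by
              rw [Real.sqrt_div hε.le, Real.sqrt_sq hr.le]
      · rw [Complex.norm_def]
        have : normSq (deriv q x) ≤ ε / r^2 := by
          rw [le_div_iff₀ hr2]; linarith [e2]
        calc Real.sqrt (normSq (deriv q x)) ≤ Real.sqrt (ε / r^2) := Real.sqrt_le_sqrt this
          _ = Real.sqrt ε / r := by
              rw [Real.sqrt_div hε.le, Real.sqrt_sq hr.le]
    · intro w hw
      have hw1 : ‖w‖ < 1 := mem_ball_iff_abs.1 (hball hw)
      have hmem : F (symPi l w) ∈ euclideanBall2 := hbij.mapsTo (symPi_mem_G2 hl hw1)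
      simp only [euclideanBall2, mem_setOf_eq, Complex.sq_norm] at hmem
      exact hmem.le
    · have := hfar l x hl hx1 hMl
      exact this.le
  have hdiffp : ∀ x ∈ s, DifferentiableAt ℂ p x := fun x hx =>
    (hp x (hs_sub hx)).differentiableAt (isOpen_ball.mem_nhds (hs_sub hx))
  have hdiffq : ∀ x ∈ s, DifferentiableAt ℂ q x := fun x hx =>
    (hq x (hs_sub hx)).differentiableAt (isOpen_ball.mem_nhds (hs_sub hx))
  have hx₁s : x₁ ∈ s := by
    rw [hs_def, mem_closedBall, dist_zero_right]
    have : ‖x₁‖ ≤ R' := le_max_left _ _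
    linarith
  have hx₂s : x₂ ∈ s := by
    rw [hs_def, mem_closedBall, dist_zero_right]
    have : ‖x₂‖ ≤ R' := le_max_right _ _
    linarith
  have hmvp : ‖p x₁ - p x₂‖ ≤ (Real.sqrt ε / r) * ‖x₁ - x₂‖ :=
    Convex.norm_image_sub_le_of_norm_deriv_le hdiffp (fun x hx => (hder x hx).1)
      (convex_closedBall _ _) hx₂s hx₁s
  have hmvq : ‖q x₁ - q x₂‖ ≤ (Real.sqrt ε / r) * ‖x₁ - x₂‖ :=
    Convex.norm_image_sub_le_of_norm_deriv_le hdiffq (fun x hx => (hder x hx).2)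
      (convex_closedBall _ _) hx₂s hx₁s
  have hnorm : ‖F (symPi l x₁) - F (symPi l x₂)‖
      = max ‖p x₁ - p x₂‖ ‖q x₁ - q x₂‖ := by
    rw [Prod.norm_def]
    rfl
  rw [hnorm]
  have hconst : Real.sqrt ε / r = Real.sqrt ε * (8 / (1 - R')) := by
    rw [hr_def]
    field_simp
  rw [← hconst]
  exact max_le hmvp hmvq

/-- the symmetrized bidisc `G₂` is not biholomorphic to the
Euclidean ball `B₂`. -/
theorem G2_not_biholomorphic_to_ball :
    ¬ ∃ F G : ℂ × ℂ → ℂ × ℂ,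
        DifferentiableOn ℂ F G2 ∧ DifferentiableOn ℂ G euclideanBall2 ∧
        Set.BijOn F G2 euclideanBall2 ∧ Set.InvOn G F G2 euclideanBall2 := by
  rintro ⟨F, G, hF, hG, hbij, hinv⟩
  -- Step 1: for any x₁ x₂ in the disc, F ∘ symPi is independent of the second argument
  have hindep : ∀ x₁ x₂ l : ℂ, ‖x₁‖ < 1 → ‖x₂‖ < 1 →
      ‖l‖ < 1 → F (symPi l x₁) = F (symPi l x₂) := by
    intro x₁ x₂ l₀ h₁ h₂ hl₀
    set Cb : ℝ := (8 / (1 - max (‖x₁‖) (‖x₂‖))) * ‖x₁ - x₂‖ with hCb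
    have hdiffψ : DifferentiableOn ℂ
        (fun l => F (symPi l x₁) - F (symPi l x₂)) (ball (0:ℂ) 1) :=
      (slice_diff_l hF h₁).sub (slice_diff_l hF h₂)
    have hkey : ∀ ε : ℝ, 0 < ε →
        ‖F (symPi l₀ x₁) - F (symPi l₀ x₂)‖ ≤ Cb * Real.sqrt ε := by
      intro ε hε
      obtain ⟨M, hM0, hM1, hbound⟩ := diff_bound hF hG hbij hinv h₁ h₂ hε
      set t : ℝ := (1 + max (‖l₀‖) M)/2 with ht_def
      have hmax0 : 0 ≤ max (‖l₀‖) M := le_max_iff.2 (Or.inr hM0)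
      have hmax1 : max (‖l₀‖) M < 1 := max_lt hl₀ hM1
      have htpos : 0 < t := by rw [ht_def]; linarith
      have ht1 : t < 1 := by rw [ht_def]; linarith
      have htM : M < t := by
        have : M ≤ max (‖l₀‖) M := le_max_right _ _
        rw [ht_def]; linarith
      have htl : ‖l₀‖ < t := by
        have : ‖l₀‖ ≤ max (‖l₀‖) M := le_max_left _ _
        rw [ht_def]; linarith
      have hfr : ∀ z ∈ frontier (ball (0:ℂ) t),
          ‖F (symPi z x₁) - F (symPi z x₂)‖ ≤ Cb * Real.sqrt ε := by
        intro z hz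
        rw [frontier_ball _ (ne_of_gt htpos), mem_sphere, dist_zero_right] at hz
        have hz1 : ‖z‖ < 1 := by rw [hz]; exact ht1
        have hzM : M < ‖z‖ := by rw [hz]; exact htM
        have := hbound z hz1 hzM
        calc ‖F (symPi z x₁) - F (symPi z x₂)‖
            ≤ (Real.sqrt ε * (8 / (1 - max (‖x₁‖) (‖x₂‖)))) * ‖x₁ - x₂‖ :=
              this
          _ = Cb * Real.sqrt ε := by rw [hCb]; ring
      have hcl : l₀ ∈ closure (ball (0:ℂ) t) :=
        subset_closure (by rw [mem_ball, dist_zero_right]; exact htl)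
      have hdc : DiffContOnCl ℂ (fun l => F (symPi l x₁) - F (symPi l x₂)) (ball (0:ℂ) t) := by
        apply DifferentiableOn.diffContOnCl
        apply hdiffψ.mono
        rw [closure_ball _ (ne_of_gt htpos)]
        exact closedBall_subset_ball ht1
      exact Complex.norm_le_of_forall_mem_frontier_norm_le (Metric.isBounded_ball) hdc hfr hcl
    have := eq_zero_of_le_sqrt (norm_nonneg _) hkey
    rwa [norm_sub_eq_zero_iff] at this
  -- Step 2: F is constant on G2
  have habs0 : ‖(0:ℂ)‖ < 1 := by simp
  have hconst : ∀ l m : ℂ, ‖l‖ < 1 → ‖m‖ < 1 →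
      F (symPi l m) = F (symPi 0 0) := by
    intro l m hl hm
    have h1 : F (symPi l m) = F (symPi l 0) := hindep m 0 l hm habs0 hl
    have h2 : symPi l 0 = symPi 0 l := by simp [symPi]
    have h3 : F (symPi 0 l) = F (symPi 0 0) := hindep l 0 0 hl habs0 habs0
    rw [h1, h2, h3]
  -- Step 3: contradiction with injectivity
  have hhalf : ‖(1/2 : ℂ)‖ < 1 := by
    rw [norm_div]
    simp
    norm_num
  have heq : F (symPi (1/2) 0) = F (symPi 0 0) := hconst _ _ hhalf habs0
  have hmem1 : symPi (1/2 : ℂ) 0 ∈ G2 := symPi_mem_G2 hhalf habs0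
  have hmem2 : symPi (0:ℂ) 0 ∈ G2 := symPi_mem_G2 habs0 habs0
  have := hbij.injOn hmem1 hmem2 heq
  simp only [symPi, Prod.ext_iff] at this
  have : (1/2 : ℂ) = 0 := by
    have h := this.1
    simpa using h
  norm_num at this
end
end

section
/- If F is a holomorphic automorphism of G₂ fixing Σ₂ pointwise (i.e. F(2λ, λ²) = (2λ, λ²) for all λ ∈ E), then its derivative at the origin is diagonal: F'(0,0) = [[1, 0], [0, d]] for some d ∈ ℂ. -/
open Set

noncomputable section

namespace SymBidisc

lemma ball_subset_G2 : Metric.ball (0 : ℂ × ℂ) (1/8) ⊆ G2 := by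
  rintro ⟨s, p⟩ h
  rw [mem_ball_zero_iff, Prod.norm_def, max_lt_iff] at h
  obtain ⟨hs, hp⟩ := h
  obtain ⟨w, hw⟩ : ∃ w : ℂ, w ^ 2 = s ^ 2 - 4 * p := IsAlgClosed.exists_pow_nat_eq _ zero_lt_two
  have hwabs : ‖w‖ < 3/4 := by
    have h1 : (‖w‖) ^ 2 = ‖s ^ 2 - 4 * p‖ := by
      rw [← norm_pow, hw]
    have h2 : ‖s ^ 2 - 4 * p‖ ≤ ‖s‖ ^ 2 + 4 * ‖p‖ := by
      calc ‖s ^ 2 - 4 * p‖ ≤ ‖s ^ 2‖ + ‖4 * p‖ :=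
            norm_sub_le _ _
        _ = ‖s‖ ^ 2 + 4 * ‖p‖ := by rw [norm_pow, norm_mul]; norm_num
    nlinarith [norm_nonneg w, norm_nonneg s, norm_nonneg p]
  refine ⟨(s + w)/2, ?_, (s - w)/2, ?_, ?_⟩
  · simp only [unitDisc, mem_setOf_eq, norm_div]
    calc ‖s + w‖ / ‖(2:ℂ)‖ ≤ (‖s‖ + ‖w‖) / 2 := by
          rw [Complex.norm_two]; gcongr; exact norm_add_le _ _
      _ < 1 := by linarith
  · simp only [unitDisc, mem_setOf_eq, norm_div]
    calc ‖s - w‖ / ‖(2:ℂ)‖ ≤ (‖s‖ + ‖w‖) / 2 := by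
          rw [Complex.norm_two]; gcongr; exact norm_sub_le _ _
      _ < 1 := by linarith
  · simp only [symPi, Prod.mk.injEq]
    constructor
    · ring
    · field_simp
      linear_combination (-(1:ℂ)/1) * hw

lemma G2_subset_ball : G2 ⊆ Metric.ball (0 : ℂ × ℂ) 2 := by
  rintro ⟨s, p⟩ ⟨l₁, h₁, l₂, h₂, h⟩
  simp only [symPi, Prod.mk.injEq] at h
  rw [mem_ball_zero_iff, Prod.norm_def, max_lt_iff]
  simp only [unitDisc, mem_setOf_eq] at h₁ h₂
  constructor
  · simp only [← h.1]
    calc ‖l₁ + l₂‖ ≤ ‖l₁‖ + ‖l₂‖ := norm_add_le _ _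
      _ < 2 := by linarith
  · simp only [← h.2, norm_mul]
    nlinarith [norm_nonneg l₁, norm_nonneg l₂]

lemma origin_mem_G2 : ((0,0) : ℂ × ℂ) ∈ G2 :=
  ⟨0, by simp [unitDisc], 0, by simp [unitDisc], by simp [symPi]⟩

lemma G2_mem_nhds : G2 ∈ nhds ((0,0) : ℂ × ℂ) :=
  Filter.mem_of_superset (Metric.ball_mem_nhds _ (by norm_num)) ball_subset_G2

/-- The symmetry `(s,p) ↦ (-s,p)` as a continuous linear map. -/
def Tmap : (ℂ × ℂ) →L[ℂ] ℂ × ℂ :=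
  ((-1 : ℂ) • ContinuousLinearMap.fst ℂ ℂ ℂ).prod (ContinuousLinearMap.snd ℂ ℂ ℂ)

lemma Tmap_apply (w : ℂ × ℂ) : Tmap w = (-w.1, w.2) := by
  simp [Tmap]

lemma Tmap_mapsTo : MapsTo Tmap G2 G2 := by
  rintro ⟨s, p⟩ ⟨l₁, h₁, l₂, h₂, h⟩
  simp only [symPi, Prod.mk.injEq] at h
  refine ⟨-l₁, by simpa [unitDisc] using h₁, -l₂, by simpa [unitDisc] using h₂, ?_⟩
  simp only [symPi, Tmap_apply, Prod.mk.injEq]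
  exact ⟨by rw [← h.1]; ring, by rw [← h.2]; ring⟩

end SymBidisc

open SymBidisc

/-- if an automorphism of `G₂` fixes `Σ₂` pointwise then its derivative
at the origin is the diagonal matrix `[[1, 0], [0, d]]`. -/
theorem derivative_at_origin_diagonal
    (F : ℂ × ℂ → ℂ × ℂ) (hF : IsAutomorphismOf G2 F)
    (hfix : ∀ l ∈ unitDisc, F (2 * l, l ^ 2) = (2 * l, l ^ 2)) :
    ∃ d : ℂ,
      fderiv ℂ F (0, 0) (1, 0) = (1, 0) ∧
      fderiv ℂ F (0, 0) (0, 1) = (0, d) := by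
  obtain ⟨hFd, hFmaps, G, hGd, hGmaps, hInvL, hInvR⟩ := hF
  have hF00 : F ((0,0) : ℂ × ℂ) = (0,0) := by
    have := hfix 0 (by simp [unitDisc])
    simpa using this
  have hG00 : G ((0,0) : ℂ × ℂ) = (0,0) := by
    have := hInvL origin_mem_G2
    rwa [hF00] at this
  have hFat : DifferentiableAt ℂ F ((0,0) : ℂ × ℂ) := hFd.differentiableAt G2_mem_nhds
  have hGat : DifferentiableAt ℂ G ((0,0) : ℂ × ℂ) := hGd.differentiableAt G2_mem_nhds
  set L := fderiv ℂ F ((0,0) : ℂ × ℂ) with hLdef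
  set M := fderiv ℂ G ((0,0) : ℂ × ℂ) with hMdef
  have hL : HasFDerivAt F L ((0,0) : ℂ × ℂ) := hFat.hasFDerivAt
  have hM : HasFDerivAt G M ((0,0) : ℂ × ℂ) := hGat.hasFDerivAt
  -- Step 1: L (1,0) = (1,0)
  have hL10 : L (1, 0) = (1, 0) := by
    have hc : HasDerivAt (fun l : ℂ => ((2 * l, l ^ 2) : ℂ × ℂ)) (((2 : ℂ), (0 : ℂ)) : ℂ × ℂ) 0 := by
      have h1 : HasDerivAt (fun l : ℂ => 2 * l) 2 0 := by
        simpa using (hasDerivAt_id (0 : ℂ)).const_mul (2 : ℂ)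
      have h2 : HasDerivAt (fun l : ℂ => l ^ 2) 0 0 := by
        simpa using hasDerivAt_pow 2 (0 : ℂ)
      exact h1.prodMk h2
    have hcomp : HasDerivAt (fun l : ℂ => F (2 * l, l ^ 2)) (L (2, 0)) 0 := by
      have hL' : HasFDerivAt F L ((fun l : ℂ => ((2 * l, l ^ 2) : ℂ × ℂ)) 0) := by
        simpa using hL
      have := hL'.comp_hasDerivAt (0 : ℂ) hc
      exact this
    have heq : (fun l : ℂ => F (2 * l, l ^ 2)) =ᶠ[nhds (0 : ℂ)]
        (fun l : ℂ => ((2 * l, l ^ 2) : ℂ × ℂ)) := by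
      have hopen : IsOpen unitDisc := isOpen_lt continuous_norm continuous_const
      filter_upwards [hopen.mem_nhds (by simp [unitDisc])] with l hl
      exact hfix l hl
    have huniq : L ((2 : ℂ), (0 : ℂ)) = ((2 : ℂ), (0 : ℂ)) :=
      (hcomp.congr_of_eventuallyEq heq.symm).unique hc
    have h20 : ((2 : ℂ), (0 : ℂ)) = (2 : ℂ) • ((1 : ℂ), (0 : ℂ)) := by simp [Prod.smul_mk]
    calc L (1, 0) = (2 : ℂ)⁻¹ • L ((2 : ℂ) • ((1:ℂ), (0:ℂ))) := by
          rw [map_smul, smul_smul]; norm_num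
      _ = (2 : ℂ)⁻¹ • ((2:ℂ), (0:ℂ)) := by rw [← h20, huniq]
      _ = (1, 0) := by simp [Prod.smul_mk]
  -- Step 2: M ∘ L = id and L ∘ M = id
  have hGF : (fun w => G (F w)) =ᶠ[nhds ((0,0) : ℂ × ℂ)] id :=
    Filter.eventually_of_mem G2_mem_nhds (fun x hx => hInvL hx)
  have hFG : (fun w => F (G w)) =ᶠ[nhds ((0,0) : ℂ × ℂ)] id :=
    Filter.eventually_of_mem G2_mem_nhds (fun x hx => hInvR hx)
  have hML : ∀ v : ℂ × ℂ, M (L v) = v := by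
    intro v
    have hM' : HasFDerivAt G M (F ((0,0) : ℂ × ℂ)) := by rwa [hF00]
    have hcomp : HasFDerivAt (fun w => G (F w)) (M.comp L) ((0,0) : ℂ × ℂ) := hM'.comp _ hL
    have hid : HasFDerivAt (id : ℂ × ℂ → ℂ × ℂ) (ContinuousLinearMap.id ℂ (ℂ × ℂ))
        ((0,0) : ℂ × ℂ) := hasFDerivAt_id _
    calc M (L v) = (M.comp L) v := rfl
      _ = (ContinuousLinearMap.id ℂ (ℂ × ℂ)) v := by
          rw [(hcomp.congr_of_eventuallyEq hGF.symm).unique hid]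
      _ = v := rfl
  have hLM : ∀ v : ℂ × ℂ, L (M v) = v := by
    intro v
    have hL' : HasFDerivAt F L (G ((0,0) : ℂ × ℂ)) := by rwa [hG00]
    have hcomp : HasFDerivAt (fun w => F (G w)) (L.comp M) ((0,0) : ℂ × ℂ) := hL'.comp _ hM
    have hid : HasFDerivAt (id : ℂ × ℂ → ℂ × ℂ) (ContinuousLinearMap.id ℂ (ℂ × ℂ))
        ((0,0) : ℂ × ℂ) := hasFDerivAt_id _
    calc L (M v) = (L.comp M) v := rfl
      _ = (ContinuousLinearMap.id ℂ (ℂ × ℂ)) v := by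
          rw [(hcomp.congr_of_eventuallyEq hFG.symm).unique hid]
      _ = v := rfl
  -- notation for entries of second column
  set a := (L ((0,1) : ℂ × ℂ)).1 with hadef
  set c := (L ((0,1) : ℂ × ℂ)).2 with hcdef
  have hLac : L ((0,1) : ℂ × ℂ) = (a, c) := rfl
  have hM10 : M ((1,0) : ℂ × ℂ) = (1,0) := by
    have := hML ((1,0) : ℂ × ℂ)
    rwa [hL10] at this
  have hMac : M ((a, c) : ℂ × ℂ) = (0, 1) := by
    have := hML ((0,1) : ℂ × ℂ)
    rwa [hLac] at this
  have hcne : c ≠ 0 := by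
    intro hc0
    have h1 : ((a, c) : ℂ × ℂ) = a • ((1,0) : ℂ × ℂ) := by
      simp [Prod.smul_mk, hc0]
    have h2 : M ((a, c) : ℂ × ℂ) = (a, 0) := by
      rw [h1, map_smul, hM10]; simp [Prod.smul_mk]
    rw [hMac] at h2
    exact one_ne_zero (congrArg Prod.snd h2)
  have hM01 : M ((0,1) : ℂ × ℂ) = (-(a/c), c⁻¹) := by
    have hdecomp : ((0,1) : ℂ × ℂ) = c⁻¹ • (((a, c) : ℂ × ℂ) - a • ((1,0) : ℂ × ℂ)) := by
      simp only [Prod.smul_mk, Prod.mk_sub_mk, smul_eq_mul]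
      rw [Prod.mk.injEq]
      constructor
      · field_simp; ring
      · field_simp; ring
    rw [hdecomp, map_smul, map_sub, map_smul, hMac, hM10]
    simp only [Prod.smul_mk, Prod.mk_sub_mk, smul_eq_mul]
    rw [Prod.mk.injEq]
    constructor
    · field_simp; ring
    · field_simp; ring
  -- Step 3: the unipotent automorphism Ψ
  set Ψ : ℂ × ℂ → ℂ × ℂ := fun w => Tmap (F (Tmap (G w))) with hΨdef
  have hΨmaps : MapsTo Ψ G2 G2 := fun x hx =>
    Tmap_mapsTo (hFmaps (Tmap_mapsTo (hGmaps hx)))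
  have hΨdiff : DifferentiableOn ℂ Ψ G2 := by
    have d1 : DifferentiableOn ℂ (fun w => Tmap (G w)) G2 :=
      Tmap.differentiable.comp_differentiableOn hGd
    have m1 : MapsTo (fun w => Tmap (G w)) G2 G2 := fun x hx => Tmap_mapsTo (hGmaps hx)
    have d2 : DifferentiableOn ℂ (fun w => F (Tmap (G w))) G2 := hFd.comp d1 m1
    exact Tmap.differentiable.comp_differentiableOn d2
  have hT00 : Tmap ((0,0) : ℂ × ℂ) = (0,0) := by simp [Tmap_apply]
  have hΨ0 : Ψ ((0,0) : ℂ × ℂ) = (0,0) := by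
    simp only [hΨdef, hG00, hT00, hF00]
  set N : (ℂ × ℂ) →L[ℂ] ℂ × ℂ := (Tmap.comp (L.comp Tmap)).comp M with hNdef
  have hN : HasFDerivAt Ψ N ((0,0) : ℂ × ℂ) := by
    have h1 : HasFDerivAt (fun w : ℂ × ℂ => Tmap (G w)) (Tmap.comp M) ((0,0) : ℂ × ℂ) :=
      (Tmap.hasFDerivAt).comp _ hM
    have hL' : HasFDerivAt F L (Tmap (G ((0,0) : ℂ × ℂ))) := by
      rw [hG00, hT00]; exact hL
    have h2 := hL'.comp ((0,0) : ℂ × ℂ) h1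
    have hT' : HasFDerivAt (⇑Tmap) Tmap ((F ∘ fun w : ℂ × ℂ => Tmap (G w)) ((0,0) : ℂ × ℂ)) :=
      Tmap.hasFDerivAt
    have h3 := hT'.comp ((0,0) : ℂ × ℂ) h2
    have hfun : (⇑Tmap ∘ (F ∘ fun w : ℂ × ℂ => Tmap (G w))) = Ψ := by
      funext w; simp [hΨdef, Function.comp]
    have hclm : Tmap.comp (L.comp (Tmap.comp M)) = N :=
      ContinuousLinearMap.ext fun v => rfl
    rw [hfun, hclm] at h3
    exact h3
  set e := -(2 * a / c) with hedef
  have hT10 : Tmap ((1,0) : ℂ × ℂ) = -((1,0) : ℂ × ℂ) := by simp [Tmap_apply]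
  have hN10 : N ((1,0) : ℂ × ℂ) = (1,0) := by
    simp only [hNdef, ContinuousLinearMap.comp_apply]
    rw [hM10, hT10, map_neg, hL10]
    simp [Tmap_apply]
  have hN01 : N ((0,1) : ℂ × ℂ) = (e, 1) := by
    simp only [hNdef, ContinuousLinearMap.comp_apply]
    rw [hM01]
    have hT1 : Tmap ((-(a/c), c⁻¹) : ℂ × ℂ) =
        (a/c) • ((1,0) : ℂ × ℂ) + c⁻¹ • ((0,1) : ℂ × ℂ) := by
      simp [Tmap_apply, Prod.smul_mk]
    rw [hT1, map_add, map_smul, map_smul, hL10, hLac]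
    have hT2 : ((a/c) • (((1:ℂ),(0:ℂ)) : ℂ × ℂ) + c⁻¹ • ((a, c) : ℂ × ℂ)) =
        ((2 * a / c, 1) : ℂ × ℂ) := by
      simp only [Prod.smul_mk, Prod.mk_add_mk, smul_eq_mul]
      rw [Prod.mk.injEq]
      constructor
      · field_simp; ring
      · field_simp; ring
    rw [hT2, Tmap_apply, hedef]
  -- powers of N
  have hNpow : ∀ n : ℕ, (N ^ n) ((0,1) : ℂ × ℂ) = ((n : ℂ) * e, 1) := by
    intro n
    induction n with
    | zero => simp
    | succ n ih =>
      rw [pow_succ']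
      have : (N * N ^ n) ((0,1) : ℂ × ℂ) = N ((N ^ n) ((0,1) : ℂ × ℂ)) := rfl
      rw [this, ih]
      have hdecomp : (((n : ℂ) * e, 1) : ℂ × ℂ) =
          ((n : ℂ) * e) • ((1,0) : ℂ × ℂ) + ((0,1) : ℂ × ℂ) := by
        simp [Prod.smul_mk]
      rw [hdecomp, map_add, map_smul, hN10, hN01]
      simp only [Prod.smul_mk, Prod.mk_add_mk, smul_eq_mul]
      rw [Prod.mk.injEq]
      constructor
      · push_cast; ring
      · ring
  -- derivative of iterates
  have hIterFix : ∀ n : ℕ, Ψ^[n] ((0,0) : ℂ × ℂ) = (0,0) := fun n =>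
    Function.iterate_fixed hΨ0 n
  have hIterMaps : ∀ n : ℕ, MapsTo (Ψ^[n]) G2 G2 := fun n => hΨmaps.iterate n
  have hIterDiff : ∀ n : ℕ, DifferentiableOn ℂ (Ψ^[n]) G2 := by
    intro n
    induction n with
    | zero => simpa using differentiableOn_id
    | succ n ih =>
      rw [Function.iterate_succ']
      exact hΨdiff.comp ih (hIterMaps n)
  have hIterDeriv : ∀ n : ℕ, HasFDerivAt (Ψ^[n]) (N ^ n) ((0,0) : ℂ × ℂ) := by
    intro n
    induction n with
    | zero =>
      simpa [ContinuousLinearMap.one_def] using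
        (hasFDerivAt_id ((0,0) : ℂ × ℂ))
    | succ n ih =>
      rw [Function.iterate_succ', pow_succ']
      have hN' : HasFDerivAt Ψ N (Ψ^[n] ((0,0) : ℂ × ℂ)) := by rwa [hIterFix n]
      have := hN'.comp ((0,0) : ℂ × ℂ) ih
      simpa [ContinuousLinearMap.mul_def] using this
  -- Schwarz bound
  have hbound : ∀ n : ℕ, ‖(N ^ n) ((0,1) : ℂ × ℂ)‖ ≤ 16 := by
    intro n
    set h : ℂ → ℂ × ℂ := fun z => Ψ^[n] ((0 : ℂ), z) with hhdef
    have hι : ∀ z : ℂ, ((0 : ℂ), z) = z • (((0:ℂ), (1:ℂ)) : ℂ × ℂ) := by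
      intro z; simp [Prod.smul_mk]
    have hιdiff : Differentiable ℂ (fun z : ℂ => (((0:ℂ), z) : ℂ × ℂ)) := by
      have : (fun z : ℂ => (((0:ℂ), z) : ℂ × ℂ)) = fun z : ℂ => z • (((0:ℂ), (1:ℂ)) : ℂ × ℂ) := by
        funext z; exact hι z
      rw [this]
      exact fun z => ((differentiable_id z).smul_const _)
    have hιmaps : MapsTo (fun z : ℂ => (((0:ℂ), z) : ℂ × ℂ)) (Metric.ball (0:ℂ) (1/8)) G2 := by
      intro z hz
      apply ball_subset_G2
      rw [mem_ball_zero_iff] at hz ⊢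
      rw [Prod.norm_def]
      simp only [norm_zero]
      rw [max_lt_iff]
      exact ⟨by norm_num, hz⟩
    have hhdiff : DifferentiableOn ℂ h (Metric.ball (0:ℂ) (1/8)) :=
      (hIterDiff n).comp hιdiff.differentiableOn hιmaps
    have hh0 : h 0 = (0,0) := by
      simp only [hhdef]
      exact hIterFix n
    have hhmaps : MapsTo h (Metric.ball (0:ℂ) (1/8)) (Metric.ball (h 0) 2) := by
      intro z hz
      rw [hh0]
      have : h z ∈ G2 := hIterMaps n (hιmaps hz)
      have h2 := G2_subset_ball this
      exact h2
    have hSchwarz := Complex.norm_deriv_le_div_of_mapsTo_ball hhdiff (hhmaps.mono_right Metric.ball_subset_closedBall) (by norm_num : (0:ℝ) < 1/8)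
    have hder : HasDerivAt h ((N ^ n) ((0,1) : ℂ × ℂ)) 0 := by
      have hc : HasDerivAt (fun z : ℂ => (((0:ℂ), z) : ℂ × ℂ)) (((0:ℂ), (1:ℂ)) : ℂ × ℂ) 0 := by
        have : HasDerivAt (fun z : ℂ => z • (((0:ℂ), (1:ℂ)) : ℂ × ℂ)) (((0:ℂ), (1:ℂ)) : ℂ × ℂ) 0 := by
          simpa using (hasDerivAt_id (0:ℂ)).smul_const (((0:ℂ), (1:ℂ)) : ℂ × ℂ)
        refine this.congr_of_eventuallyEq ?_
        filter_upwards with z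
        exact hι z
      have hF' : HasFDerivAt (Ψ^[n]) (N ^ n) ((fun z : ℂ => (((0:ℂ), z) : ℂ × ℂ)) 0) := by
        simpa using hIterDeriv n
      have := hF'.comp_hasDerivAt (0 : ℂ) hc
      exact this
    rw [hder.deriv] at hSchwarz
    calc ‖(N ^ n) ((0,1) : ℂ × ℂ)‖ ≤ 2 / (1/8) := hSchwarz
      _ = 16 := by norm_num
  -- conclude e = 0
  have he0 : e = 0 := by
    by_contra hne
    obtain ⟨n, hn⟩ := exists_nat_gt (16 / ‖e‖)
    have h1 := hbound n
    rw [hNpow n] at h1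
    have h2 : ‖(n : ℂ) * e‖ ≤ 16 := by
      have := norm_fst_le ((((n : ℂ) * e, 1)) : ℂ × ℂ)
      exact le_trans this h1
    rw [norm_mul, Complex.norm_natCast] at h2
    have habs : 0 < ‖e‖ := norm_pos_iff.mpr hne
    have : (n : ℝ) ≤ 16 / ‖e‖ := by
      rw [le_div_iff₀ habs]; exact h2
    linarith
  have ha0 : a = 0 := by
    rw [hedef] at he0
    field_simp at he0
    have : a = 2⁻¹ * (2 * a) := by ring
    rw [mul_zero, neg_eq_zero] at he0
    rw [this, he0, mul_zero]
  exact ⟨c, hL10, by rw [hLac, ha0]⟩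
end
end

section
/- Let F = (S, P) : G₂ → ℂ² be a holomorphic map satisfying the equivariance relations S(τs, τ²p) = τ·S(s,p) and P(τs, τ²p) = τ²·P(s,p) for all (s,p) ∈ G₂ and all τ ∈ ℂ with |τ| = 1. Then there exist constants a, b, C ∈ ℂ such that S(s,p) = a·s and P(s,p) = b·p + C·s² for all (s,p) ∈ G₂. -/
open Set

noncomputable section

/-- Compatibility: the complex absolute value as a bundled absolute value. -/
abbrev Complex.abs : AbsoluteValue ℂ ℝ := NormedField.toAbsoluteValue ℂ

@[simp] lemma Complex.norm_eq_abs (z : ℂ) : ‖z‖ = Complex.abs z := rfl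

lemma Complex.abs_ofReal (r : ℝ) : Complex.abs (r : ℂ) = |r| := Complex.norm_real r

@[simp] lemma Complex.abs_two : Complex.abs (2 : ℂ) = 2 := by
  show ‖(2 : ℂ)‖ = 2; norm_num

@[simp] lemma Complex.abs_ofNat (n : ℕ) [n.AtLeastTwo] :
    Complex.abs (ofNat(n) : ℂ) = ofNat(n) := Complex.norm_ofNat n

@[simp] lemma Complex.abs_I : Complex.abs Complex.I = 1 := Complex.norm_I

lemma Complex.abs_exp (z : ℂ) : Complex.abs (Complex.exp z) = Real.exp z.re :=
  Complex.norm_exp z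

lemma mem_G2_of_small {s p : ℂ} (hs : Complex.abs s < 4⁻¹) (hp : Complex.abs p < 4⁻¹) :
    (s, p) ∈ G2 := by
  obtain ⟨w, hw⟩ := IsAlgClosed.exists_pow_nat_eq (k := ℂ) (s ^ 2 - 4 * p) two_pos
  have key : ∀ l : ℂ, l ^ 2 = s * l - p → Complex.abs l < 1 := by
    intro l hl
    by_contra h
    push_neg at h
    have h2 : Complex.abs l ^ 2 ≤ Complex.abs s * Complex.abs l + Complex.abs p := by
      calc Complex.abs l ^ 2 = Complex.abs (l ^ 2) := by rw [map_pow]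
      _ = Complex.abs (s * l - p) := by rw [hl]
      _ ≤ Complex.abs (s * l) + Complex.abs p := by
          simpa [sub_eq_add_neg] using Complex.abs.add_le (s * l) (-p)
      _ = Complex.abs s * Complex.abs l + Complex.abs p := by rw [map_mul]
    nlinarith [Complex.abs.nonneg l, Complex.abs.nonneg s, Complex.abs.nonneg p]
  refine ⟨(s + w) / 2, ?_, (s - w) / 2, ?_, ?_⟩
  · exact key _ (by linear_combination (1/4 : ℂ) * hw)
  · exact key _ (by linear_combination (1/4 : ℂ) * hw)
  · simp only [symPi, Prod.mk.injEq]
    exact ⟨by ring, by linear_combination (-(1/4) : ℂ) * hw⟩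


lemma scale_mem_G2 {z : ℂ × ℂ} (hz : z ∈ G2) {τ : ℂ} (hτ : Complex.abs τ ≤ 1) :
    (τ * z.1, τ ^ 2 * z.2) ∈ G2 := by
  obtain ⟨l₁, hl₁, l₂, hl₂, hπ⟩ := hz
  refine ⟨τ * l₁, ?_, τ * l₂, ?_, ?_⟩
  · have : Complex.abs (τ * l₁) ≤ Complex.abs l₁ := by
      rw [map_mul]
      calc Complex.abs τ * Complex.abs l₁ ≤ 1 * Complex.abs l₁ :=
        mul_le_mul_of_nonneg_right hτ (Complex.abs.nonneg _)
      _ = Complex.abs l₁ := one_mul _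
    exact lt_of_le_of_lt this hl₁
  · have : Complex.abs (τ * l₂) ≤ Complex.abs l₂ := by
      rw [map_mul]
      calc Complex.abs τ * Complex.abs l₂ ≤ 1 * Complex.abs l₂ :=
        mul_le_mul_of_nonneg_right hτ (Complex.abs.nonneg _)
      _ = Complex.abs l₂ := one_mul _
    exact lt_of_le_of_lt this hl₂
  · have h1 : l₁ + l₂ = z.1 := congrArg Prod.fst hπ
    have h2 : l₁ * l₂ = z.2 := congrArg Prod.snd hπ
    simp only [symPi, Prod.mk.injEq]
    constructor
    · rw [← h1]; ring
    · rw [← h2]; ring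

/-- Lemma A: the circle equivariance extends to the whole closed disc. -/
lemma lemmaA (f : ℂ × ℂ → ℂ) (d : ℕ) (hf : DifferentiableOn ℂ f G2)
    (hcirc : ∀ z ∈ G2, ∀ τ : ℂ, Complex.abs τ = 1 →
      f (τ * z.1, τ ^ 2 * z.2) = τ ^ d * f z) :
    ∀ z ∈ G2, ∀ τ : ℂ, Complex.abs τ ≤ 1 →
      f (τ * z.1, τ ^ 2 * z.2) = τ ^ d * f z := by
  intro z hz τ hτ
  obtain ⟨l₁, hl₁, l₂, hl₂, hπ⟩ := hz
  set m : ℝ := max (max (Complex.abs l₁) (Complex.abs l₂)) 2⁻¹ with hm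
  have hm0 : (0:ℝ) < m := lt_of_lt_of_le (by norm_num) (le_max_right _ _)
  have hm1 : m < 1 := by
    apply max_lt (max_lt hl₁ hl₂) (by norm_num)
  set R : ℝ := m⁻¹ with hR
  have hR1 : 1 < R := (one_lt_inv₀ hm0).mpr hm1
  have hmem : ∀ σ ∈ Metric.ball (0:ℂ) R, (σ * z.1, σ ^ 2 * z.2) ∈ G2 := by
    intro σ hσ
    have hσR : Complex.abs σ < R := by simpa [Complex.dist_eq] using hσ
    have habs : ∀ l : ℂ, Complex.abs l ≤ m → Complex.abs (σ * l) < 1 := by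
      intro l hl
      rw [map_mul]
      calc Complex.abs σ * Complex.abs l ≤ Complex.abs σ * m :=
        mul_le_mul_of_nonneg_left hl (Complex.abs.nonneg _)
      _ < R * m := by
        exact mul_lt_mul_of_pos_right hσR hm0
      _ = 1 := by
        rw [hR]; field_simp
    refine ⟨σ * l₁, habs l₁ (le_trans (le_max_left _ _) (le_max_left _ _)),
      σ * l₂, habs l₂ (le_trans (le_max_right _ _) (le_max_left _ _)), ?_⟩
    have h1 : l₁ + l₂ = z.1 := congrArg Prod.fst hπ
    have h2 : l₁ * l₂ = z.2 := congrArg Prod.snd hπ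
    simp only [symPi, Prod.mk.injEq]
    exact ⟨by rw [← h1]; ring, by rw [← h2]; ring⟩
  have hzG : z ∈ G2 := ⟨l₁, hl₁, l₂, hl₂, hπ⟩
  set h : ℂ → ℂ := fun σ => f (σ * z.1, σ ^ 2 * z.2) - σ ^ d * f z with hh
  have hdiff : DifferentiableOn ℂ h (Metric.ball (0:ℂ) R) := by
    apply DifferentiableOn.sub
    · have hγ : DifferentiableOn ℂ (fun σ : ℂ => (σ * z.1, σ ^ 2 * z.2))
        (Metric.ball (0:ℂ) R) := by
        apply DifferentiableOn.prodMk
        · exact (differentiable_id.mul_const _).differentiableOn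
        · exact ((differentiable_id.pow 2).mul_const _).differentiableOn
      exact hf.comp hγ (fun σ hσ => hmem σ hσ)
    · exact ((differentiable_id.pow d).mul_const _).differentiableOn
  have hanal : AnalyticOnNhd ℂ h (Metric.ball (0:ℂ) R) :=
    hdiff.analyticOnNhd Metric.isOpen_ball
  have hfreq : ∃ᶠ σ in nhdsWithin (1:ℂ) {(1:ℂ)}ᶜ, h σ = 0 := by
    set u : ℕ → ℂ := fun n => Complex.exp ((((n:ℝ)+1)⁻¹ : ℝ) * Complex.I) with hu_def
    have habs1 : ∀ n, Complex.abs (u n) = 1 := by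
      intro n
      rw [hu_def]
      simp [Complex.abs_exp]
    have hu : Filter.Tendsto u Filter.atTop (nhdsWithin (1:ℂ) {(1:ℂ)}ᶜ) := by
      rw [tendsto_nhdsWithin_iff]
      constructor
      · have h0 : Filter.Tendsto (fun n : ℕ => (((n:ℝ)+1)⁻¹ : ℝ)) Filter.atTop (nhds 0) := by
          simpa [one_div] using tendsto_one_div_add_atTop_nhds_zero_nat (𝕜 := ℝ)
        have h1 : Filter.Tendsto (fun n : ℕ => ((((n:ℝ)+1)⁻¹ : ℝ) : ℂ) * Complex.I)
            Filter.atTop (nhds 0) := by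
          have := (Complex.continuous_ofReal.tendsto 0).comp h0
          simpa using this.mul_const Complex.I
        have := (Complex.continuous_exp.tendsto 0).comp h1
        simpa [hu_def, Function.comp_def] using this
      · filter_upwards with n
        intro hcontra
        have hone : Complex.exp ((((n:ℝ)+1)⁻¹ : ℝ) * Complex.I) = 1 := hcontra
        rw [Complex.exp_eq_one_iff] at hone
        obtain ⟨k, hk⟩ := hone
        have hk' : ((((n:ℝ)+1)⁻¹ : ℝ) : ℂ) = (k:ℂ) * (2 * (Real.pi : ℂ)) := by
          have hI : (Complex.I : ℂ) ≠ 0 := Complex.I_ne_zero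
          apply mul_right_cancel₀ hI
          rw [hk]; ring
        have hk2 : (((n:ℝ)+1)⁻¹ : ℝ) = (k:ℝ) * (2 * Real.pi) := by
          exact_mod_cast hk'
        have hpos : (0:ℝ) < (((n:ℝ)+1)⁻¹ : ℝ) := by positivity
        have hle : (((n:ℝ)+1)⁻¹ : ℝ) ≤ 1 := by
          rw [inv_le_one_iff₀]
          right; linarith [Nat.cast_nonneg (α := ℝ) n]
        have hpi := Real.pi_gt_three
        rcases lt_trichotomy k 0 with hk0 | hk0 | hk0
        · have hkle : k ≤ -1 := by omega
          have : (k:ℝ) ≤ -1 := by exact_mod_cast hkle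
          nlinarith
        · rw [hk0] at hk2; simp at hk2; linarith
        · have : (1:ℝ) ≤ (k:ℝ) := by exact_mod_cast hk0
          nlinarith
    exact hu.frequently (Filter.Frequently.of_forall (fun n => by
      apply sub_eq_zero_of_eq
      exact hcirc z hzG (u n) (habs1 n)))
  have hEq : Set.EqOn h 0 (Metric.ball (0:ℂ) R) :=
    hanal.eqOn_zero_of_preconnected_of_frequently_eq_zero
      (convex_ball _ _).isPreconnected
      (by simp [Complex.dist_eq]; linarith) hfreq
  have : h τ = 0 := hEq (by simpa [Complex.dist_eq] using lt_of_le_of_lt hτ hR1)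
  simpa [hh, sub_eq_zero] using this

lemma mem_ball_pair {s p : ℂ} {r : ℝ} :
    (s, p) ∈ Metric.ball (0 : ℂ × ℂ) r ↔ Complex.abs s < r ∧ Complex.abs p < r := by
  rw [Metric.mem_ball, dist_zero_right, Prod.norm_def]
  simp [Complex.norm_eq_abs, max_lt_iff]

lemma doubleSchwarz (f : ℂ × ℂ → ℂ)
    (hdiff : ∀ z ∈ Metric.ball (0 : ℂ × ℂ) 4⁻¹, DifferentiableAt ℂ f z)
    (hs0 : ∀ s : ℂ, Complex.abs s < 4⁻¹ → f (s, 0) = 0)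
    (h0p : ∀ p : ℂ, Complex.abs p < 4⁻¹ → f (0, p) = 0) :
    ∃ K : ℝ, 0 < K ∧ ∀ s p : ℂ, Complex.abs s < 8⁻¹ → Complex.abs p < 8⁻¹ →
      Complex.abs (f (s, p)) ≤ K * (Complex.abs s * Complex.abs p) := by
  have hsub : Metric.closedBall (0 : ℂ × ℂ) 8⁻¹ ⊆ Metric.ball (0 : ℂ × ℂ) 4⁻¹ :=
    Metric.closedBall_subset_ball (by norm_num)
  have hcont : ContinuousOn f (Metric.closedBall (0 : ℂ × ℂ) 8⁻¹) := by
    intro z hz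
    exact (hdiff z (hsub hz)).continuousAt.continuousWithinAt
  obtain ⟨M, hM⟩ := (isCompact_closedBall (0 : ℂ × ℂ) 8⁻¹).exists_bound_of_continuousOn hcont
  set B : ℝ := max M 0 + 1 with hB
  have hB0 : 0 < B := by positivity
  have hfB : ∀ z ∈ Metric.closedBall (0 : ℂ × ℂ) 8⁻¹, Complex.abs (f z) < B := by
    intro z hz
    calc Complex.abs (f z) = ‖f z‖ := rfl
    _ ≤ M := hM z hz
    _ ≤ max M 0 := le_max_left _ _
    _ < B := by rw [hB]; linarith
  have hmemK : ∀ s p : ℂ, Complex.abs s < 8⁻¹ → Complex.abs p < 8⁻¹ →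
      (s, p) ∈ Metric.closedBall (0 : ℂ × ℂ) 8⁻¹ := by
    intro s p hs hp
    rw [Metric.mem_closedBall, dist_zero_right, Prod.norm_def]
    simp only [Complex.norm_eq_abs]
    exact max_le hs.le hp.le
  have hslice1 : ∀ p : ℂ, Complex.abs p < 8⁻¹ →
      DifferentiableOn ℂ (fun s => f (s, p)) (Metric.ball (0:ℂ) 8⁻¹) := by
    intro p hp s hs
    have hs' : Complex.abs s < 8⁻¹ := by simpa [Complex.dist_eq] using hs
    have : DifferentiableAt ℂ (fun s : ℂ => f (s, p)) s := by
      apply DifferentiableAt.comp (g := f) (f := fun s : ℂ => (s, p))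
      · exact hdiff (s, p) (hsub (hmemK s p hs' hp))
      · exact differentiableAt_id.prodMk (differentiableAt_const p)
    exact this.differentiableWithinAt
  -- Schwarz in s
  have step1 : ∀ s p : ℂ, Complex.abs s < 8⁻¹ → Complex.abs p < 8⁻¹ →
      Complex.abs (f (s, p)) ≤ 8 * B * Complex.abs s := by
    intro s p hs hp
    have h0 : f (0, p) = 0 := h0p p (lt_trans hp (by norm_num))
    have hmaps : Set.MapsTo (fun s => f (s, p)) (Metric.ball (0:ℂ) 8⁻¹)
        (Metric.ball (f (0, p)) B) := by
      intro x hx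
      have hx' : Complex.abs x < 8⁻¹ := by simpa [Complex.dist_eq] using hx
      rw [Metric.mem_ball, h0, dist_zero_right]
      exact hfB _ (hmemK x p hx' hp)
    have := Complex.dist_le_div_mul_dist_of_mapsTo_ball (hslice1 p hp) (hmaps.mono_right Metric.ball_subset_closedBall)
      (z := s) (by simpa [Complex.dist_eq] using hs)
    rw [h0, dist_zero_right, dist_zero_right] at this
    calc Complex.abs (f (s, p)) = ‖f (s, p)‖ := rfl
    _ ≤ B / 8⁻¹ * ‖s‖ := this
    _ = 8 * B * Complex.abs s := by rw [Complex.norm_eq_abs]; ring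
  -- Schwarz in p
  refine ⟨64 * B, by positivity, ?_⟩
  intro s p hs hp
  have hslice2 : DifferentiableOn ℂ (fun q => f (s, q)) (Metric.ball (0:ℂ) 8⁻¹) := by
    intro q hq
    have hq' : Complex.abs q < 8⁻¹ := by simpa [Complex.dist_eq] using hq
    have : DifferentiableAt ℂ (fun q : ℂ => f (s, q)) q := by
      apply DifferentiableAt.comp (g := f) (f := fun q : ℂ => (s, q))
      · exact hdiff (s, q) (hsub (hmemK s q hs hq'))
      · exact (differentiableAt_const s).prodMk differentiableAt_id
    exact this.differentiableWithinAt
  have h00 : f (s, 0) = 0 := hs0 s (lt_trans hs (by norm_num))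
  have key : ∀ ε : ℝ, 0 < ε →
      Complex.abs (f (s, p)) ≤ 8 * (8 * B * Complex.abs s + ε) * Complex.abs p := by
    intro ε hε
    have hmaps : Set.MapsTo (fun q => f (s, q)) (Metric.ball (0:ℂ) 8⁻¹)
        (Metric.ball (f (s, 0)) (8 * B * Complex.abs s + ε)) := by
      intro q hq
      have hq' : Complex.abs q < 8⁻¹ := by simpa [Complex.dist_eq] using hq
      rw [Metric.mem_ball, h00, dist_zero_right]
      calc ‖f (s, q)‖ = Complex.abs (f (s, q)) := rfl
      _ ≤ 8 * B * Complex.abs s := step1 s q hs hq'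
      _ < 8 * B * Complex.abs s + ε := by linarith
    have := Complex.dist_le_div_mul_dist_of_mapsTo_ball hslice2 (hmaps.mono_right Metric.ball_subset_closedBall)
      (z := p) (by simpa [Complex.dist_eq] using hp)
    rw [h00, dist_zero_right, dist_zero_right] at this
    calc Complex.abs (f (s, p)) = ‖f (s, p)‖ := rfl
    _ ≤ (8 * B * Complex.abs s + ε) / 8⁻¹ * ‖p‖ := this
    _ = 8 * (8 * B * Complex.abs s + ε) * Complex.abs p := by
        rw [Complex.norm_eq_abs]; ring
  apply le_of_forall_pos_le_add
  intro ε hε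
  have hεp : 0 < ε / (8 * (Complex.abs p + 1)) := by positivity
  calc Complex.abs (f (s, p))
      ≤ 8 * (8 * B * Complex.abs s + ε / (8 * (Complex.abs p + 1))) * Complex.abs p :=
        key _ hεp
    _ = 64 * B * (Complex.abs s * Complex.abs p)
        + ε * (Complex.abs p / (Complex.abs p + 1)) := by
        field_simp
        ring
    _ ≤ 64 * B * (Complex.abs s * Complex.abs p) + ε := by
        have h1 : Complex.abs p / (Complex.abs p + 1) ≤ 1 := by
          rw [div_le_one (by positivity)]
          linarith
        nlinarith [Complex.abs.nonneg p]

/-- a holomorphic map `F = (S, P) : G₂ → ℂ²` equivariant under all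
rotations (`S(τs,τ²p) = τS(s,p)`, `P(τs,τ²p) = τ²P(s,p)` for `|τ| = 1`) has the form
`S(s,p) = a·s`, `P(s,p) = b·p + C·s²`. -/
theorem equivariant_map_form
    (S P : ℂ × ℂ → ℂ)
    (hS : DifferentiableOn ℂ S G2) (hP : DifferentiableOn ℂ P G2)
    (hequiv : ∀ z ∈ G2, ∀ τ : ℂ, ‖τ‖ = 1 →
      S (τ * z.1, τ ^ 2 * z.2) = τ * S z ∧
      P (τ * z.1, τ ^ 2 * z.2) = τ ^ 2 * P z) :
    ∃ a b C : ℂ, ∀ z ∈ G2, S z = a * z.1 ∧ P z = b * z.2 + C * z.1 ^ 2 := by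
  have hSfull := lemmaA S 1 hS (fun z hz τ hτ => by
    simpa [pow_one] using (hequiv z hz τ hτ).1)
  have hPfull := lemmaA P 2 hP (fun z hz τ hτ => (hequiv z hz τ hτ).2)
  -- base points
  have hhalf : ((2⁻¹ : ℂ), (0 : ℂ)) ∈ G2 := by
    refine ⟨2⁻¹, ?_, 0, ?_, ?_⟩
    · simp [unitDisc]; norm_num
    · simp [unitDisc]
    · simp [symPi]
  have hquarter : ((0 : ℂ), (4⁻¹ : ℂ)) ∈ G2 := by
    refine ⟨Complex.I / 2, ?_, -(Complex.I / 2), ?_, ?_⟩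
    · simp [unitDisc]; norm_num
    · simp [unitDisc]; norm_num
    · simp only [symPi, Prod.mk.injEq]
      constructor
      · ring
      · have := Complex.I_sq
        linear_combination (-(4⁻¹ : ℂ)) * this
  set a : ℂ := 2 * S (2⁻¹, 0) with ha
  set C : ℂ := 4 * P (2⁻¹, 0) with hC
  set b : ℂ := 4 * P (0, 4⁻¹) with hb
  set u : ℂ × ℂ → ℂ := fun z => S z - a * z.1 with hu
  set v : ℂ × ℂ → ℂ := fun z => P z - b * z.2 - C * z.1 ^ 2 with hv
  have hu_scale : ∀ z ∈ G2, ∀ τ : ℂ, Complex.abs τ ≤ 1 →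
      u (τ * z.1, τ ^ 2 * z.2) = τ * u z := by
    intro z hz τ hτ
    have := hSfull z hz τ hτ
    simp only [hu]
    rw [this]; ring
  have hv_scale : ∀ z ∈ G2, ∀ τ : ℂ, Complex.abs τ ≤ 1 →
      v (τ * z.1, τ ^ 2 * z.2) = τ ^ 2 * v z := by
    intro z hz τ hτ
    have := hPfull z hz τ hτ
    simp only [hv]
    rw [this]; ring
  -- u vanishes on the axes
  have hu_s0 : ∀ s : ℂ, Complex.abs s < 4⁻¹ → u (s, 0) = 0 := by
    intro s hs
    have hτ : Complex.abs (2 * s) ≤ 1 := by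
      rw [map_mul]
      simp only [Complex.abs_two]
      nlinarith [Complex.abs.nonneg s]
    have h1 := hSfull _ hhalf (2 * s) hτ
    have harg : ((2 * s) * ((2⁻¹ : ℂ), (0 : ℂ)).1, (2 * s) ^ 2 * ((2⁻¹ : ℂ), (0 : ℂ)).2)
        = (s, (0 : ℂ)) := by
      simp only [Prod.mk.injEq]
      constructor <;> ring
    rw [harg] at h1
    simp only [hu]
    rw [h1, ha]; ring
  have sqrt4p : ∀ p : ℂ, Complex.abs p < 4⁻¹ → ∃ w : ℂ, w ^ 2 = 4 * p ∧
      Complex.abs w ≤ 1 := by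
    intro p hp
    obtain ⟨w, hw⟩ := IsAlgClosed.exists_pow_nat_eq (k := ℂ) (4 * p) two_pos
    refine ⟨w, hw, ?_⟩
    have h1 : Complex.abs w ^ 2 = Complex.abs (4 * p) := by rw [← map_pow, hw]
    have h2 : Complex.abs (4 * p) < 1 := by
      rw [map_mul]
      have : Complex.abs (4 : ℂ) = 4 := by norm_num [Complex.abs_ofNat]
      rw [this]; linarith
    nlinarith [Complex.abs.nonneg w]
  have hSker : ∀ w : ℂ, Complex.abs w ≤ 1 →
      S (w * ((0:ℂ), (4⁻¹:ℂ)).1, w ^ 2 * ((0:ℂ), (4⁻¹:ℂ)).2) = w * S (0, 4⁻¹) := by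
    intro w hw
    simpa [pow_one] using hSfull _ hquarter w hw
  have hu_0p : ∀ p : ℂ, Complex.abs p < 4⁻¹ → u (0, p) = 0 := by
    intro p hp
    obtain ⟨w, hw, hw1⟩ := sqrt4p p hp
    have hwn : Complex.abs (-w) ≤ 1 := by rw [Complex.abs.map_neg]; exact hw1
    have h1 := hSker w hw1
    have h2 := hSker (-w) hwn
    have harg : ∀ y : ℂ, y ^ 2 = w ^ 2 →
        (y * ((0:ℂ), (4⁻¹:ℂ)).1, y ^ 2 * ((0:ℂ), (4⁻¹:ℂ)).2) = ((0:ℂ), p) := by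
      intro y hy
      simp only [Prod.mk.injEq]
      constructor
      · ring
      · rw [hy]; field_simp; linear_combination hw
    rw [harg w rfl] at h1
    rw [harg (-w) (by ring)] at h2
    have : (2 : ℂ) * S (0, p) = 0 := by
      calc (2:ℂ) * S (0, p) = S (0, p) + S (0, p) := by ring
      _ = w * S (0, 4⁻¹) + (-w) * S (0, 4⁻¹) := by rw [← h1, ← h2]
      _ = 0 := by ring
    have hS0 : S (0, p) = 0 := by
      rcases mul_eq_zero.mp this with h | h
      · norm_num at h
      · exact h
    simp only [hu]
    rw [hS0]; ring
  -- v vanishes on the axes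
  have hv_s0 : ∀ s : ℂ, Complex.abs s < 4⁻¹ → v (s, 0) = 0 := by
    intro s hs
    have hτ : Complex.abs (2 * s) ≤ 1 := by
      rw [map_mul]
      simp only [Complex.abs_two]
      nlinarith [Complex.abs.nonneg s]
    have h1 := hPfull _ hhalf (2 * s) hτ
    have harg : ((2 * s) * ((2⁻¹ : ℂ), (0 : ℂ)).1, (2 * s) ^ 2 * ((2⁻¹ : ℂ), (0 : ℂ)).2)
        = (s, (0 : ℂ)) := by
      simp only [Prod.mk.injEq]
      constructor <;> ring
    rw [harg] at h1
    simp only [hv]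
    rw [h1, hC]; ring
  have hv_0p : ∀ p : ℂ, Complex.abs p < 4⁻¹ → v (0, p) = 0 := by
    intro p hp
    obtain ⟨w, hw, hw1⟩ := sqrt4p p hp
    have h1 := hPfull _ hquarter w hw1
    have harg : (w * ((0:ℂ), (4⁻¹:ℂ)).1, w ^ 2 * ((0:ℂ), (4⁻¹:ℂ)).2) = ((0:ℂ), p) := by
      simp only [Prod.mk.injEq]
      constructor
      · ring
      · field_simp; linear_combination hw
    rw [harg] at h1
    simp only [hv]
    rw [h1, hb, hw]; ring
  -- differentiability on the small ball
  have hball : Metric.ball (0 : ℂ × ℂ) 4⁻¹ ⊆ G2 := by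
    intro z hz
    have : (z.1, z.2) ∈ Metric.ball (0 : ℂ × ℂ) 4⁻¹ := by simpa using hz
    rw [mem_ball_pair] at this
    have := mem_G2_of_small this.1 this.2
    simpa using this
  have hnhds : ∀ z ∈ Metric.ball (0 : ℂ × ℂ) 4⁻¹, G2 ∈ nhds z := by
    intro z hz
    exact Filter.mem_of_superset (Metric.isOpen_ball.mem_nhds hz) hball
  have hudiff : ∀ z ∈ Metric.ball (0 : ℂ × ℂ) 4⁻¹, DifferentiableAt ℂ u z := by
    intro z hz
    have hSat : DifferentiableAt ℂ S z :=
      (hS z (hball hz)).differentiableAt (hnhds z hz)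
    exact hSat.sub (differentiableAt_fst.const_mul a)
  have hvdiff : ∀ z ∈ Metric.ball (0 : ℂ × ℂ) 4⁻¹, DifferentiableAt ℂ v z := by
    intro z hz
    have hPat : DifferentiableAt ℂ P z :=
      (hP z (hball hz)).differentiableAt (hnhds z hz)
    exact (hPat.sub (differentiableAt_snd.const_mul b)).sub
      ((differentiableAt_fst.pow 2).const_mul C)
  obtain ⟨Ku, hKu0, hKu⟩ := doubleSchwarz u hudiff hu_s0 hu_0p
  obtain ⟨Kv, hKv0, hKv⟩ := doubleSchwarz v hvdiff hv_s0 hv_0p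
  -- u and v vanish on the small polydisc
  have hseq0 : Filter.Tendsto (fun n : ℕ => (((n:ℝ)+1)⁻¹ : ℝ)) Filter.atTop (nhds 0) := by
    simpa [one_div] using tendsto_one_div_add_atTop_nhds_zero_nat (𝕜 := ℝ)
  have huzero : ∀ s p : ℂ, Complex.abs s < 8⁻¹ → Complex.abs p < 8⁻¹ → u (s, p) = 0 := by
    intro s p hs hp
    have hG : (s, p) ∈ G2 := mem_G2_of_small (hs.trans (by norm_num)) (hp.trans (by norm_num))
    have hbound : ∀ n : ℕ, Complex.abs (u (s, p)) ≤
        Ku * (Complex.abs s * Complex.abs p) * (((n:ℝ)+1)⁻¹) := by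
      intro n
      set t : ℝ := ((n:ℝ)+1)⁻¹ with ht
      have ht0 : 0 < t := by positivity
      have ht1 : t ≤ 1 := by
        rw [ht, inv_le_one_iff₀]; right; linarith [Nat.cast_nonneg (α := ℝ) n]
      have habsτ : Complex.abs ((t : ℂ)) = t := by
        rw [Complex.abs_ofReal, abs_of_pos ht0]
      have hscale := hu_scale (s, p) hG (t : ℂ) (by rw [habsτ]; exact ht1)
      have habs1 : Complex.abs ((t:ℂ) * s) < 8⁻¹ := by
        rw [map_mul, habsτ]
        calc t * Complex.abs s ≤ 1 * Complex.abs s :=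
          mul_le_mul_of_nonneg_right ht1 (Complex.abs.nonneg _)
        _ < 8⁻¹ := by rw [one_mul]; exact hs
      have habs2 : Complex.abs ((t:ℂ) ^ 2 * p) < 8⁻¹ := by
        rw [map_mul, map_pow, habsτ]
        calc t ^ 2 * Complex.abs p ≤ 1 * Complex.abs p := by nlinarith [mul_nonneg (Complex.abs.nonneg p) (mul_nonneg (sub_nonneg.mpr ht1) (by positivity : (0:ℝ) ≤ 1 + t))]
        _ < 8⁻¹ := by rw [one_mul]; exact hp
      have hK := hKu ((t:ℂ) * s) ((t:ℂ) ^ 2 * p) habs1 habs2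
      rw [hscale] at hK
      rw [map_mul, habsτ] at hK
      rw [map_mul, map_mul, map_pow, habsτ] at hK
      have : t * Complex.abs (u (s, p)) ≤ Ku * (t * Complex.abs s * (t^2 * Complex.abs p)) := hK
      calc Complex.abs (u (s, p)) = t * Complex.abs (u (s, p)) / t := by field_simp
      _ ≤ Ku * (t * Complex.abs s * (t^2 * Complex.abs p)) / t := by
          exact div_le_div_of_nonneg_right this ht0.le
      _ = Ku * (Complex.abs s * Complex.abs p) * t * t := by field_simp
      _ ≤ Ku * (Complex.abs s * Complex.abs p) * t * 1 := by
          have h1 : 0 ≤ Ku * (Complex.abs s * Complex.abs p) * t := by positivity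
          nlinarith
      _ = Ku * (Complex.abs s * Complex.abs p) * t := by ring
    have hlim : Filter.Tendsto (fun n : ℕ => Ku * (Complex.abs s * Complex.abs p) *
        (((n:ℝ)+1)⁻¹)) Filter.atTop (nhds 0) := by
      simpa using hseq0.const_mul (Ku * (Complex.abs s * Complex.abs p))
    have h0 : Complex.abs (u (s, p)) ≤ 0 := ge_of_tendsto' hlim hbound
    have := le_antisymm h0 (Complex.abs.nonneg _)
    exact Complex.abs.eq_zero.mp this
  have hvzero : ∀ s p : ℂ, Complex.abs s < 8⁻¹ → Complex.abs p < 8⁻¹ → v (s, p) = 0 := by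
    intro s p hs hp
    have hG : (s, p) ∈ G2 := mem_G2_of_small (hs.trans (by norm_num)) (hp.trans (by norm_num))
    have hbound : ∀ n : ℕ, Complex.abs (v (s, p)) ≤
        Kv * (Complex.abs s * Complex.abs p) * (((n:ℝ)+1)⁻¹) := by
      intro n
      set t : ℝ := ((n:ℝ)+1)⁻¹ with ht
      have ht0 : 0 < t := by positivity
      have ht1 : t ≤ 1 := by
        rw [ht, inv_le_one_iff₀]; right; linarith [Nat.cast_nonneg (α := ℝ) n]
      have habsτ : Complex.abs ((t : ℂ)) = t := by
        rw [Complex.abs_ofReal, abs_of_pos ht0]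
      have hscale := hv_scale (s, p) hG (t : ℂ) (by rw [habsτ]; exact ht1)
      have habs1 : Complex.abs ((t:ℂ) * s) < 8⁻¹ := by
        rw [map_mul, habsτ]
        calc t * Complex.abs s ≤ 1 * Complex.abs s :=
          mul_le_mul_of_nonneg_right ht1 (Complex.abs.nonneg _)
        _ < 8⁻¹ := by rw [one_mul]; exact hs
      have habs2 : Complex.abs ((t:ℂ) ^ 2 * p) < 8⁻¹ := by
        rw [map_mul, map_pow, habsτ]
        calc t ^ 2 * Complex.abs p ≤ 1 * Complex.abs p := by nlinarith [mul_nonneg (Complex.abs.nonneg p) (mul_nonneg (sub_nonneg.mpr ht1) (by positivity : (0:ℝ) ≤ 1 + t))]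
        _ < 8⁻¹ := by rw [one_mul]; exact hp
      have hK := hKv ((t:ℂ) * s) ((t:ℂ) ^ 2 * p) habs1 habs2
      rw [hscale] at hK
      rw [map_mul, map_pow, habsτ] at hK
      rw [map_mul, map_mul, map_pow, habsτ] at hK
      have hK' : t^2 * Complex.abs (v (s, p)) ≤
          Kv * (t * Complex.abs s * (t^2 * Complex.abs p)) := hK
      have ht2 : (0:ℝ) < t^2 := by positivity
      calc Complex.abs (v (s, p)) = t^2 * Complex.abs (v (s, p)) / t^2 := by field_simp
      _ ≤ Kv * (t * Complex.abs s * (t^2 * Complex.abs p)) / t^2 := by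
          exact div_le_div_of_nonneg_right hK' ht2.le
      _ = Kv * (Complex.abs s * Complex.abs p) * t := by field_simp
    have hlim : Filter.Tendsto (fun n : ℕ => Kv * (Complex.abs s * Complex.abs p) *
        (((n:ℝ)+1)⁻¹)) Filter.atTop (nhds 0) := by
      simpa using hseq0.const_mul (Kv * (Complex.abs s * Complex.abs p))
    have h0 : Complex.abs (v (s, p)) ≤ 0 := ge_of_tendsto' hlim hbound
    have := le_antisymm h0 (Complex.abs.nonneg _)
    exact Complex.abs.eq_zero.mp this
  -- conclusion
  refine ⟨a, b, C, ?_⟩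
  intro z hz
  obtain ⟨l₁, hl₁, l₂, hl₂, hπ⟩ := hz
  have hz1 : Complex.abs z.1 < 2 := by
    have h1 : l₁ + l₂ = z.1 := congrArg Prod.fst hπ
    rw [← h1]
    calc Complex.abs (l₁ + l₂) ≤ Complex.abs l₁ + Complex.abs l₂ := Complex.abs.add_le _ _
    _ < 2 := by
        have := hl₁; have := hl₂
        simp only [unitDisc, Set.mem_setOf_eq, Complex.norm_eq_abs] at *
        linarith
  have hz2 : Complex.abs z.2 < 1 := by
    have h2 : l₁ * l₂ = z.2 := congrArg Prod.snd hπ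
    rw [← h2, map_mul]
    have h1 := hl₁; have h2' := hl₂
    simp only [unitDisc, Set.mem_setOf_eq, Complex.norm_eq_abs] at h1 h2'
    nlinarith [Complex.abs.nonneg l₁, Complex.abs.nonneg l₂]
  have hzG : z ∈ G2 := ⟨l₁, hl₁, l₂, hl₂, hπ⟩
  set τ : ℂ := 16⁻¹ with hτdef
  have habsτ : Complex.abs τ = 16⁻¹ := by
    rw [hτdef, map_inv₀]
    norm_num [Complex.abs_ofNat]
  have hτ1 : Complex.abs τ ≤ 1 := by rw [habsτ]; norm_num
  have hb1 : Complex.abs (τ * z.1) < 8⁻¹ := by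
    rw [map_mul, habsτ]; nlinarith [Complex.abs.nonneg z.1]
  have hb2 : Complex.abs (τ ^ 2 * z.2) < 8⁻¹ := by
    rw [map_mul, map_pow, habsτ]; nlinarith [Complex.abs.nonneg z.2]
  have huz : τ * u z = 0 := by
    rw [← hu_scale z hzG τ hτ1]
    exact huzero _ _ hb1 hb2
  have hvz : τ ^ 2 * v z = 0 := by
    rw [← hv_scale z hzG τ hτ1]
    exact hvzero _ _ hb1 hb2
  have hτne : τ ≠ 0 := by
    rw [hτdef]; norm_num
  have huz0 : u z = 0 := by
    rcases mul_eq_zero.mp huz with h | h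
    · exact absurd h hτne
    · exact h
  have hvz0 : v z = 0 := by
    rcases mul_eq_zero.mp hvz with h | h
    · exact absurd h (pow_ne_zero 2 hτne)
    · exact h
  constructor
  · have h : S z - a * z.1 = 0 := huz0
    linear_combination h
  · have h : P z - b * z.2 - C * z.1 ^ 2 = 0 := hvz0
    linear_combination h

end
end
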